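/- Let B ∈ L(H,K), A ∈ L(H)⁺ with (A, N(B)) compatible, and let x₀ ∈ N(B)^⊥, x₀ ≠ 0. For u ∈ x₀ + N(B), one has ‖u‖_A ≤ ‖x‖_A for every x ∈ x₀ + N(B) if and only if there exists Q ∈ P(A, N(B)) with u = (I − Q)x₀. -/

import Mathlib

open ContinuousLinearMap

/-- `P(A,S)`: the set of `A`-Hermitian bounded projections with range `S`. -/
def PAS {H : Type*} [NormedAddCommGroup H] [InnerProductSpace ℂ H] [CompleteSpace H]
    (A : H →L[ℂ] H) (S : Submodule ℂ H) : Set (H →L[ℂ] H) :=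
  {Q | Q ∘L Q = Q ∧ LinearMap.range (Q : H →ₗ[ℂ] H) = S ∧ A ∘L Q = adjoint Q ∘L A}

section Aux

variable {H : Type*} [NormedAddCommGroup H] [InnerProductSpace ℂ H] [CompleteSpace H]

private lemma quad_aux {c d : ℝ} (hd : 0 ≤ d) (h : ∀ t : ℝ, 0 ≤ 2*t*c + t^2*d) : c = 0 := by
  have hd1 : (0:ℝ) < d + 1 := by linarith
  have h1 := h (-c/(d+1))
  have h2 : (2*(-c/(d+1))*c + (-c/(d+1))^2*d) * (d+1)^2 = -(c^2*(d+2)) := by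
    field_simp
    ring
  have h3 : 0 ≤ -(c^2*(d+2)) := by
    rw [← h2]; exact mul_nonneg h1 (sq_nonneg _)
  nlinarith [sq_nonneg c]

private lemma expand_re (A : H →L[ℂ] H) (hsa : IsSelfAdjoint A) (x y : H) :
    (inner ℂ (A (x+y)) (x+y) : ℂ).re
      = (inner ℂ (A x) x : ℂ).re + 2*(inner ℂ (A x) y : ℂ).re + (inner ℂ (A y) y : ℂ).re := by
  have hsym : (inner ℂ (A y) x : ℂ) = starRingEnd ℂ (inner ℂ (A x) y) := by
    rw [inner_conj_symm]
    exact hsa.isSymmetric y x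
  rw [map_add, inner_add_left, inner_add_right, inner_add_right, hsym]
  simp only [Complex.add_re, Complex.conj_re]
  ring

private lemma inner_eq_zero_of_min (A : H →L[ℂ] H) (hA : A.IsPositive) (a z : H)
    (h : ∀ c : ℂ, (inner ℂ (A a) a : ℂ).re ≤ (inner ℂ (A (a + c • z)) (a + c • z) : ℂ).re) :
    (inner ℂ (A a) z : ℂ) = 0 := by
  set γ : ℂ := inner ℂ (A a) z with hγ
  set d : ℝ := (inner ℂ (A z) z : ℂ).re with hdd
  have hd : 0 ≤ d := by
    have := hA.re_inner_nonneg_left z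
    simpa using this
  have hre : ∀ c : ℂ, 0 ≤ 2 * (c * γ).re + Complex.normSq c * d := by
    intro c
    have h1 := h c
    rw [expand_re A hA.isSelfAdjoint a (c • z)] at h1
    have e1 : (inner ℂ (A a) (c • z) : ℂ) = c * γ := by rw [inner_smul_right]
    have e2 : (inner ℂ (A (c • z)) (c • z) : ℂ) = (Complex.normSq c : ℂ) * (inner ℂ (A z) z : ℂ) := by
      rw [map_smul, inner_smul_left, inner_smul_right, ← mul_assoc,
        Complex.normSq_eq_conj_mul_self]
    rw [e1, e2] at h1
    have : ((Complex.normSq c : ℂ) * (inner ℂ (A z) z : ℂ)).re = Complex.normSq c * d := by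
      simp [hdd]
    rw [this] at h1
    linarith
  have hre0 : γ.re = 0 := by
    apply quad_aux hd
    intro t
    have h' : 0 ≤ 2 * (t * γ.re) + t * t * d := by
      have := hre (t : ℂ)
      have e : ((t:ℂ) * γ).re = t * γ.re := by simp
      rw [e] at this
      simpa [Complex.normSq_ofReal, sq] using this
    have e2 : 2*t*γ.re + t^2*d = 2 * (t * γ.re) + t * t * d := by ring
    rw [e2]
    exact h'
  have him0 : -γ.im = 0 := by
    apply quad_aux hd
    intro t
    have h' : 0 ≤ 2 * (t * -γ.im) + t * t * d := by
      have := hre ((t : ℂ) * Complex.I)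
      have e : ((t:ℂ) * Complex.I * γ).re = t * -γ.im := by
        simp [Complex.mul_re]
      rw [e] at this
      simpa [Complex.normSq_mul, Complex.normSq_ofReal, sq] using this
    have e2 : 2*t*(-γ.im) + t^2*d = 2 * (t * -γ.im) + t * t * d := by ring
    rw [e2]
    exact h'
  have him : γ.im = 0 := by linarith
  exact Complex.ext (by simpa using hre0) (by simpa using him)

end Aux

theorem stmt_17
    {H K : Type*}
    [NormedAddCommGroup H] [InnerProductSpace ℂ H] [CompleteSpace H]
    [NormedAddCommGroup K] [InnerProductSpace ℂ K] [CompleteSpace K]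
    (B : H →L[ℂ] K)
    (A : H →L[ℂ] H) (hA : A.IsPositive)
    (hcompat : (PAS A (LinearMap.ker (B : H →ₗ[ℂ] K))).Nonempty)
    (x₀ : H) (hx₀ : x₀ ∈ (LinearMap.ker (B : H →ₗ[ℂ] K))ᗮ) (hx₀ne : x₀ ≠ 0)
    (u : H) (hu : u - x₀ ∈ LinearMap.ker (B : H →ₗ[ℂ] K)) :
    (∀ x : H, x - x₀ ∈ LinearMap.ker (B : H →ₗ[ℂ] K) →
        (inner ℂ (A u) u : ℂ).re ≤ (inner ℂ (A x) x : ℂ).re) ↔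
    (∃ Q ∈ PAS A (LinearMap.ker (B : H →ₗ[ℂ] K)), u = x₀ - Q x₀) := by
  set N : Submodule ℂ H := LinearMap.ker (B : H →ₗ[ℂ] K) with hN
  have horth : ∀ n ∈ N, (inner ℂ x₀ n : ℂ) = 0 := by
    intro n hn
    rw [← inner_conj_symm, (Submodule.mem_orthogonal _ _).mp hx₀ n hn, map_zero]
  constructor
  · intro hmin
    obtain ⟨Q₀, hQ₀idem, hQ₀range, hQ₀adj⟩ := hcompat
    have hQfix : ∀ n ∈ N, Q₀ n = n := by
      intro n hn
      rw [← hQ₀range] at hn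
      obtain ⟨m, rfl⟩ := hn
      calc Q₀ (Q₀ m) = (Q₀ ∘L Q₀) m := rfl
        _ = Q₀ m := by rw [hQ₀idem]
    -- A u is A-orthogonal to N
    have hAu : ∀ n ∈ N, (inner ℂ (A u) n : ℂ) = 0 := by
      intro n hn
      apply inner_eq_zero_of_min A hA u n
      intro c
      apply hmin
      have e : u + c • n - x₀ = (u - x₀) + c • n := by abel
      rw [e]
      exact add_mem hu (Submodule.smul_mem _ _ hn)
    set w : H := Q₀ x₀ - x₀ + u with hw
    have hwN : w ∈ N := by
      have h1 : Q₀ x₀ ∈ N := hQ₀range ▸ ⟨x₀, rfl⟩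
      have e : w = Q₀ x₀ + (u - x₀) := by rw [hw]; abel
      rw [e]
      exact add_mem h1 hu
    have hAwN : ∀ n ∈ N, (inner ℂ (A w) n : ℂ) = 0 := by
      intro n hn
      have e1 : (inner ℂ (A (Q₀ x₀)) n : ℂ) = inner ℂ (A x₀) n := by
        have e : A (Q₀ x₀) = (A ∘L Q₀) x₀ := rfl
        rw [e, hQ₀adj, comp_apply, adjoint_inner_left, hQfix n hn]
      have e2 : A w = A (Q₀ x₀) - A x₀ + A u := by
        rw [hw, map_add, map_sub]
      rw [e2, inner_add_left, inner_sub_left, e1, hAu n hn]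
      ring
    have hAw : A w = 0 := by
      have hall : ∀ z : H, (inner ℂ (A w) z : ℂ) = 0 := by
        intro z
        apply inner_eq_zero_of_min A hA w z
        intro c
        have h0 : (inner ℂ (A w) w : ℂ).re = 0 := by rw [hAwN w hwN]; simp
        rw [h0]
        have := hA.re_inner_nonneg_left (w + c • z)
        simpa only [RCLike.re_to_complex] using this
      exact inner_self_eq_zero.mp (hall (A w))
    have hixx : (inner ℂ x₀ x₀ : ℂ) ≠ 0 := inner_self_ne_zero.mpr hx₀ne
    set v : H := ((inner ℂ x₀ x₀ : ℂ))⁻¹ • (-w) with hv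
    have hvN : v ∈ N := Submodule.smul_mem _ _ (neg_mem hwN)
    have hAv : A v = 0 := by
      rw [hv, map_smul, map_neg, hAw, neg_zero, smul_zero]
    set Z : H →L[ℂ] H := (innerSL ℂ x₀).smulRight v with hZdef
    have hZ : ∀ x : H, Z x = (inner ℂ x₀ x : ℂ) • v := by
      intro x; rfl
    have hZx₀ : Z x₀ = -w := by
      rw [hZ, hv, smul_smul, mul_inv_cancel₀ hixx, one_smul]
    have hZN : ∀ x : H, Z x ∈ N := fun x => by rw [hZ]; exact Submodule.smul_mem _ _ hvN
    have hZzero : ∀ n ∈ N, Z n = 0 := by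
      intro n hn
      rw [hZ, horth n hn, zero_smul]
    set Q : H →L[ℂ] H := Q₀ + Z with hQdef
    refine ⟨Q, ⟨?_, ?_, ?_⟩, ?_⟩
    · -- idempotent
      ext x
      have e1 : Q₀ (Z x) = Z x := hQfix _ (hZN x)
      have e2 : Z (Q₀ x) = 0 := hZzero _ (hQ₀range ▸ ⟨x, rfl⟩)
      have e3 : Z (Z x) = 0 := hZzero _ (hZN x)
      have e4 : Q₀ (Q₀ x) = Q₀ x := by
        calc Q₀ (Q₀ x) = (Q₀ ∘L Q₀) x := rfl
          _ = Q₀ x := by rw [hQ₀idem]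
      simp only [comp_apply, hQdef, add_apply, map_add]
      rw [e1, e2, e3, e4]
      abel
    · -- range
      apply le_antisymm
      · rintro y ⟨x, rfl⟩
        have : Q x = Q₀ x + Z x := rfl
        rw [coe_coe, this]
        exact add_mem (hQ₀range ▸ ⟨x, rfl⟩) (hZN x)
      · intro n hn
        refine ⟨n, ?_⟩
        have : Q n = Q₀ n + Z n := rfl
        rw [coe_coe, this, hQfix n hn, hZzero n hn, add_zero]
    · -- A Q = Q* A
      have hAZ : A ∘L Z = 0 := by
        ext x
        simp [comp_apply, hZ, map_smul, hAv]
      have hAadj : adjoint A = A := isSelfAdjoint_iff'.mp hA.isSelfAdjoint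
      have hZA : adjoint Z ∘L A = 0 := by
        have h1 : adjoint (A ∘L Z) = adjoint Z ∘L adjoint A := adjoint_comp A Z
        rw [hAZ] at h1
        rw [hAadj] at h1
        simpa using h1.symm
      rw [hQdef, comp_add, map_add, add_comp, hAZ, hZA, add_zero, add_zero, hQ₀adj]
    · -- u = x₀ - Q x₀
      have : Q x₀ = Q₀ x₀ + Z x₀ := rfl
      rw [this, hZx₀, hw]
      abel
  · rintro ⟨Q, ⟨hidem, hrange, hadj⟩, hueq⟩
    intro x hx
    set n : H := x - u with hn'
    have hnN : n ∈ N := by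
      have e : n = (x - x₀) - (u - x₀) := by rw [hn']; abel
      rw [e]
      exact sub_mem hx hu
    have hQfix : ∀ m ∈ N, Q m = m := by
      intro m hm
      rw [← hrange] at hm
      obtain ⟨k, rfl⟩ := hm
      calc Q (Q k) = (Q ∘L Q) k := rfl
        _ = Q k := by rw [hidem]
    have hAun : (inner ℂ (A u) n : ℂ) = 0 := by
      have e1 : (inner ℂ (A (Q x₀)) n : ℂ) = inner ℂ (A x₀) n := by
        have e : A (Q x₀) = (A ∘L Q) x₀ := rfl
        rw [e, hadj, comp_apply, adjoint_inner_left, hQfix n hnN]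
      rw [hueq, map_sub, inner_sub_left, e1, sub_self]
    have e : x = u + n := by rw [hn']; abel
    rw [e, expand_re A hA.isSelfAdjoint u n, hAun]
    have := hA.re_inner_nonneg_left n
    simp only [Complex.zero_re, mul_zero, add_zero]
    have h2 : 0 ≤ (inner ℂ (A n) n : ℂ).re := by simpa using this
    linarith
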